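/- For any $p \geq 1$ and $n \geq 1$, the element $c^{-n}_p := \sum_{j=0}^{p} c_{p-j} e_j(-y_1, \ldots, -y_n)$ lies in the ideal of $\Gamma[x_1,\ldots,x_n,y_1,\ldots,y_n]$ generated by $\{{}^n c^n_q : q \geq 1\}$ whenever $p \geq n+1$. -/

import Mathlib

noncomputable section
open MvPolynomial

/-- The element `c_p` of the free polynomial ring `ℤ[c_1, c_2, …]`, with the
conventions `c_0 = 1` and `c_p = 0` for `p < 0`. -/
def cFree : ℤ → MvPolynomial ℕ ℤ := fun p =>
  if p ≤ 0 then (if p = 0 then 1 else 0) else X (p.toNat - 1)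

/-- The relation `c_p² + 2 ∑_{i=1}^p (-1)^i c_{p+i} c_{p-i}`. -/
def relC (p : ℕ) : MvPolynomial ℕ ℤ :=
  cFree (p : ℤ) ^ 2 +
    2 * ∑ i ∈ Finset.Icc 1 p,
      (-1 : MvPolynomial ℕ ℤ) ^ i * cFree ((p : ℤ) + i) * cFree ((p : ℤ) - i)

/-- The ideal generated by the relations `relC p` for `p ≥ 1`. -/
def IGam : Ideal (MvPolynomial ℕ ℤ) := Ideal.span {f | ∃ p : ℕ, 1 ≤ p ∧ f = relC p}

/-- The ring `Γ`. -/
abbrev GammaR := MvPolynomial ℕ ℤ ⧸ IGam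

/-- The class of `c_p` in `Γ`. -/
def cQ : ℤ → GammaR := fun p => Ideal.Quotient.mk IGam (cFree p)

/-- The elementary symmetric polynomial `e_j` evaluated at the family `v i`,
`i ∈ s`. -/
def esymF {R : Type*} [CommRing R] {σ : Type*} [DecidableEq σ]
    (s : Finset σ) (v : σ → R) (j : ℕ) : R :=
  ∑ t ∈ Finset.powersetCard j s, ∏ i ∈ t, v i

/-- The complete homogeneous symmetric polynomial `h_j` evaluated at the family
`v i`, `i ∈ s`. -/
def hsymF {R : Type*} [CommRing R] {σ : Type*} [DecidableEq σ]
    (s : Finset σ) (v : σ → R) (j : ℕ) : R :=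
  ∑ m ∈ Finset.sym s j, (m.1.map v).prod

/-- The ring `Γ[x_1,…,x_n,y_1,…,y_n]`. -/
abbrev Rng (n : ℕ) := MvPolynomial (Fin n ⊕ Fin n) GammaR

/-- The variable `x_i`. -/
def xv (n : ℕ) (i : Fin n) : Rng n := X (Sum.inl i)

/-- The variable `y_i`. -/
def yv (n : ℕ) (i : Fin n) : Rng n := X (Sum.inr i)

/-- `ⁿcⁿ_p = ∑_{i,j} c_{p-i-j} e_i(X_n) h_j(-Y_n)`. -/
def ncn (n p : ℕ) : Rng n :=
  ∑ i ∈ Finset.range (p + 1), ∑ j ∈ Finset.range (p + 1),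
    C (cQ ((p : ℤ) - i - j)) * esymF Finset.univ (xv n) i *
      hsymF Finset.univ (fun t => -(yv n t)) j

/-- `c^{-n}_p = ∑_j c_{p-j} e_j(-Y_n)`. -/
def cnegn (n p : ℕ) : Rng n :=
  ∑ j ∈ Finset.range (p + 1),
    C (cQ ((p : ℤ) - j)) * esymF Finset.univ (fun t => -(yv n t)) j


open PowerSeries Finset


variable {R : Type*} [CommRing R] {σ : Type*} [DecidableEq σ]

/-- geometric series -/
def geomS (c : R) : PowerSeries R := PowerSeries.mk fun k => c ^ k

lemma geomS_mul (c : R) : geomS c * (1 - PowerSeries.C c * PowerSeries.X) = 1 := by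
  ext d
  cases d with
  | zero => simp [geomS, PowerSeries.coeff_zero_eq_constantCoeff]
  | succ n =>
    rw [mul_sub, mul_one]
    simp only [map_sub]
    rw [show geomS c * (PowerSeries.C c * PowerSeries.X) = PowerSeries.C c * (PowerSeries.X * geomS c) by ring]
    rw [PowerSeries.coeff_C_mul, PowerSeries.coeff_succ_X_mul]
    simp [geomS, pow_succ, mul_comm]

lemma esymF_zero (s : Finset σ) (v : σ → R) : esymF s v 0 = 1 := by
  simp [esymF]

lemma hsymF_zero (s : Finset σ) (v : σ → R) : hsymF s v 0 = 1 := by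
  rw [hsymF, Finset.sym_zero, Finset.sum_singleton]
  rfl

lemma esymF_insert (a : σ) (s : Finset σ) (ha : a ∉ s) (v : σ → R) (j : ℕ) :
    esymF (insert a s) v (j+1) = esymF s v (j+1) + v a * esymF s v j := by
  unfold esymF
  rw [Finset.powersetCard_succ_insert ha, Finset.sum_union, Finset.sum_image, Finset.mul_sum]
  · congr 1
    refine Finset.sum_congr rfl fun t ht => ?_
    rw [Finset.mem_powersetCard] at ht
    rw [Finset.prod_insert (fun h => ha (ht.1 h))]
  · intro x hx y hy hxy
    rw [Finset.mem_coe, Finset.mem_powersetCard] at hx hy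
    have hax : a ∉ x := fun h => ha (hx.1 h)
    have hay : a ∉ y := fun h => ha (hy.1 h)
    rw [← Finset.erase_insert hax, ← Finset.erase_insert hay, hxy]
  · rw [Finset.disjoint_right]
    rintro t ht ht'
    rw [Finset.mem_image] at ht
    obtain ⟨u, hu, rfl⟩ := ht
    rw [Finset.mem_powersetCard] at ht'
    exact ha (ht'.1 (Finset.mem_insert_self a u))

/-- The alternating esym series is the product of (1 - v i X). -/
lemma esymAlt_eq (s : Finset σ) (v : σ → R) :
    (PowerSeries.mk fun j => (-1)^j * esymF s v j) = ∏ i ∈ s, (1 - PowerSeries.C (v i) * PowerSeries.X) := by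
  induction s using Finset.induction with
  | empty =>
    ext d
    cases d with
    | zero => simp [esymF_zero]
    | succ n =>
      simp only [Finset.prod_empty, PowerSeries.coeff_mk]
      rw [PowerSeries.coeff_one]
      simp only [Nat.succ_ne_zero, if_false]
      have : esymF (∅ : Finset σ) v (n+1) = 0 := by
        rw [esymF, Finset.powersetCard_eq_empty.2 (by simp), Finset.sum_empty]
      rw [this, mul_zero]
  | @insert a s' ha ih =>
    rw [Finset.prod_insert ha, ← ih]
    ext d
    rw [PowerSeries.coeff_mk, sub_mul, one_mul, map_sub]
    cases d with
    | zero =>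
      simp only [PowerSeries.coeff_zero_eq_constantCoeff, map_mul]
      simp [esymF_zero]
    | succ n =>
      rw [esymF_insert a s' ha]
      rw [mul_assoc]
      rw [PowerSeries.coeff_C_mul, PowerSeries.coeff_succ_X_mul]
      simp only [PowerSeries.coeff_mk]
      ring

lemma hsymF_coeff (s : Finset σ) (v : σ → R) (d : ℕ) :
    hsymF s v d = PowerSeries.coeff d (∏ i ∈ s, geomS (v i)) := by
  classical
  rw [PowerSeries.coeff_prod]
  simp only [geomS, PowerSeries.coeff_mk]
  refine Finset.sum_bij' (fun (m : Sym σ d) _ => Multiset.toFinsupp (m : Multiset σ))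
    (fun l hl => Sym.mk (Finsupp.toMultiset l) ?_) ?_ ?_ ?_ ?_ ?_
  · rw [Finset.mem_finsuppAntidiag] at hl
    rw [Finsupp.card_toMultiset, ← hl.1, Finsupp.sum]
    exact Finset.sum_subset hl.2 (fun x _ hx => Finsupp.notMem_support_iff.1 hx)
  · -- hi : image in finsuppAntidiag
    intro m hm
    rw [Finset.mem_finsuppAntidiag]
    rw [Finset.mem_sym_iff] at hm
    constructor
    · have hc : ∑ a ∈ m.1.toFinset, Multiset.count a m.1 = d := by
        rw [Multiset.toFinset_sum_count_eq]; exact m.2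
      change ∑ a ∈ s, Multiset.toFinsupp (m : Multiset σ) a = d
      simp only [Finset.sum_apply', Multiset.toFinsupp_apply]
      refine ((Finset.sum_subset ?_ ?_).symm).trans hc
      · intro a ha
        rw [Multiset.mem_toFinset] at ha
        exact hm a ha
      · intro x _ hx
        rw [Multiset.mem_toFinset] at hx
        exact Multiset.count_eq_zero_of_notMem hx
    · rw [Multiset.toFinsupp_support]
      intro a ha
      rw [Multiset.mem_toFinset] at ha
      exact hm a ha
  · -- hj : inverse maps into sym
    intro l hl
    rw [Finset.mem_finsuppAntidiag] at hl
    rw [Finset.mem_sym_iff]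
    intro a ha
    have : a ∈ Finsupp.toMultiset l := ha
    rw [Finsupp.mem_toMultiset] at this
    exact hl.2 this
  · intro m hm
    exact Sym.coe_injective (by simp [Multiset.toFinsupp_toMultiset])
  · intro l hl
    simp [Finsupp.toMultiset_toFinsupp]
  · -- values agree
    intro m hm
    rw [Finset.mem_sym_iff] at hm
    rw [Finset.prod_multiset_map_count]
    simp only [Multiset.toFinsupp_apply]
    refine Finset.prod_subset ?_ ?_
    · intro a ha
      rw [Multiset.mem_toFinset] at ha
      exact hm a ha
    · intro x _ hx
      rw [Multiset.mem_toFinset] at hx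
      rw [Multiset.count_eq_zero_of_notMem hx, pow_zero]

lemma hsymF_mul_esymAlt (s : Finset σ) (v : σ → R) :
    (PowerSeries.mk fun j => hsymF s v j) *
      (PowerSeries.mk fun j => (-1)^j * esymF s v j) = 1 := by
  have h1 : (PowerSeries.mk fun j => hsymF s v j) = ∏ i ∈ s, geomS (v i) := by
    ext d; rw [PowerSeries.coeff_mk, hsymF_coeff]
  rw [h1, esymAlt_eq, ← Finset.prod_mul_distrib]
  rw [Finset.prod_congr rfl fun i _ => geomS_mul (v i)]
  exact Finset.prod_const_one

lemma cQ_neg {m : ℤ} (hm : m < 0) : cQ m = 0 := by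
  unfold cQ cFree
  rw [if_pos hm.le, if_neg hm.ne, map_zero]

lemma cQ_zero : cQ 0 = 1 := by
  unfold cQ cFree
  norm_num

/-- `cQ` with natural index. -/
def cZ (k : ℕ) : GammaR := cQ (k : ℤ)

lemma relQ_zero (p : ℕ) (hp : 1 ≤ p) :
    cZ p ^ 2 + 2 * ∑ i ∈ Finset.Icc 1 p,
      (-1 : GammaR) ^ i * cZ (p + i) * cZ (p - i) = 0 := by
  have hmem : relC p ∈ IGam := Ideal.subset_span ⟨p, hp, rfl⟩
  have h0 : Ideal.Quotient.mk IGam (relC p) = 0 :=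
    (Ideal.Quotient.eq_zero_iff_mem).2 hmem
  rw [relC] at h0
  simp only [map_add, map_mul, map_pow, map_sum, map_neg, map_one, map_ofNat] at h0
  have hsum : ∀ i ∈ Finset.Icc 1 p, (-1 : GammaR) ^ i * cZ (p + i) * cZ (p - i)
      = (-1) ^ i * Ideal.Quotient.mk IGam (cFree ((p : ℤ) + i)) *
        Ideal.Quotient.mk IGam (cFree ((p : ℤ) - i)) := by
    intro i hi
    rw [Finset.mem_Icc] at hi
    unfold cZ cQ
    rw [show ((p + i : ℕ) : ℤ) = (p : ℤ) + i by push_cast; ring,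
      show ((p - i : ℕ) : ℤ) = (p : ℤ) - i by omega]
  rw [Finset.sum_congr rfl hsum]
  exact h0

lemma neg_one_pow_eq_of_add_eq {G : Type*} [CommRing G] {a b m : ℕ} (h : a + b = m) (hm : Odd m) :
    (-1 : G) ^ a = -(-1 : G) ^ b := by
  have h1 : (-1 : G) ^ a * ((-1 : G) ^ b * (-1 : G) ^ b) = (-1 : G) ^ a := by
    rw [← pow_add, ← two_mul, pow_mul]; norm_num
  have h2 : (-1 : G) ^ a * (-1 : G) ^ b = -1 := by
    rw [← pow_add, h]; exact hm.neg_one_pow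
  calc (-1 : G) ^ a = (-1 : G) ^ a * (-1 : G) ^ b * (-1 : G) ^ b := by
        rw [mul_assoc, h1]
    _ = -(-1 : G) ^ b := by rw [h2, neg_one_mul]

lemma sum_cancel (m : ℕ) (hm : 1 ≤ m) :
    ∑ x ∈ Finset.HasAntidiagonal.antidiagonal m, (-1 : GammaR) ^ x.2 * cZ x.1 * cZ x.2 = 0 := by
  rcases Nat.even_or_odd m with he | ho
  · -- even case : m = 2p
    obtain ⟨p, rfl⟩ := he
    have hp : 1 ≤ p := by omega
    rw [← Finset.Nat.sum_antidiagonal_swap]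
    rw [Finset.Nat.sum_antidiagonal_eq_sum_range_succ_mk]
    simp only [Prod.snd_swap, Prod.fst_swap]
    -- now goal : ∑ b ∈ range (p+p+1), (-1)^b * cZ (p+p-b) * cZ b ... check components
    set g : ℕ → GammaR := fun b => (-1 : GammaR) ^ b * cZ (p + p - b) * cZ b with hg
    have hsplit : ∑ b ∈ Finset.range (p + p + 1), g b
        = ∑ b ∈ Finset.range p, g b + ∑ b ∈ Finset.Ico p (p + p + 1), g b := by
      have h := Finset.sum_Ico_consecutive g (Nat.zero_le p) (by omega : p ≤ p + p + 1)
      simp only [Finset.range_eq_Ico]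
      exact h.symm
    have h2 : ∑ b ∈ Finset.Ico p (p + p + 1), g b
        = g p + ∑ i ∈ Finset.Icc 1 p, g (p + i) := by
      rw [Finset.sum_Ico_eq_sum_range]
      have hpp : p + p + 1 - p = p + 1 := by omega
      rw [hpp, Finset.sum_range_succ']
      rw [show Finset.Icc 1 p = Finset.Ico 1 (p+1) by rw [Finset.Ico_add_one_right_eq_Icc],
        Finset.sum_Ico_eq_sum_range]
      simp only [add_tsub_cancel_right, add_zero]
      rw [add_comm]
      congr 1
      refine Finset.sum_congr rfl fun i _ => ?_
      congr 1
      omega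
    have h1 : ∑ b ∈ Finset.range p, g b = ∑ i ∈ Finset.Icc 1 p, g (p - i) := by
      rw [show Finset.Icc 1 p = Finset.Ico 1 (p+1) by rw [Finset.Ico_add_one_right_eq_Icc],
        Finset.sum_Ico_eq_sum_range]
      simp only [add_tsub_cancel_right]
      rw [← Finset.sum_range_reflect]
      refine Finset.sum_congr rfl fun i hi => ?_
      rw [Finset.mem_range] at hi
      congr 1
      omega
    rw [hsplit, h1, h2]
    rw [show (∑ i ∈ Finset.Icc 1 p, g (p - i)) + (g p + ∑ i ∈ Finset.Icc 1 p, g (p + i))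
        = g p + ∑ i ∈ Finset.Icc 1 p, (g (p - i) + g (p + i)) from by
      rw [Finset.sum_add_distrib]; ring]
    have hterm : ∀ i ∈ Finset.Icc 1 p, g (p - i) + g (p + i)
        = (-1 : GammaR) ^ p * (2 * ((-1 : GammaR) ^ i * cZ (p + i) * cZ (p - i))) := by
      intro i hi
      rw [Finset.mem_Icc] at hi
      have e1 : p + p - (p - i) = p + i := by omega
      have e2 : p + p - (p + i) = p - i := by omega
      rw [hg]
      simp only [e1, e2]
      have e3 : (-1 : GammaR) ^ (p - i) = (-1 : GammaR) ^ (p + i) := by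
        have : p - i + 2 * i = p + i := by omega
        calc (-1 : GammaR) ^ (p - i) = (-1 : GammaR) ^ (p - i) * ((-1 : GammaR) ^ (2 * i)) := by
              rw [pow_mul]; norm_num
          _ = (-1 : GammaR) ^ (p + i) := by rw [← pow_add, this]
      rw [e3, pow_add]
      ring
    rw [Finset.sum_congr rfl hterm, ← Finset.mul_sum, ← Finset.mul_sum]
    have hgp : g p = (-1 : GammaR) ^ p * cZ p ^ 2 := by
      rw [hg]; simp only [add_tsub_cancel_left]; ring
    rw [hgp, ← mul_add, relQ_zero p hp, mul_zero]
  · -- odd case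
    refine Finset.sum_involution (fun x _ => x.swap) ?_ ?_ ?_ ?_
    · intro x hx
      rw [Finset.HasAntidiagonal.mem_antidiagonal] at hx
      have h := neg_one_pow_eq_of_add_eq (G := GammaR) hx ho
      simp only [Prod.snd_swap, Prod.fst_swap]
      rw [h]
      ring
    · intro x hx hfx hsw
      rw [Finset.HasAntidiagonal.mem_antidiagonal] at hx
      have h1 : x.2 = x.1 := congrArg Prod.fst hsw
      have heven : Even m := by rw [← hx, h1]; exact ⟨x.1, rfl⟩
      exact absurd ho (Nat.not_odd_iff_even.mpr heven)
    · intro x hx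
      rw [Finset.HasAntidiagonal.mem_antidiagonal] at hx ⊢
      simpa [add_comm] using hx
    · intro x hx
      exact Prod.swap_swap x

section Assemble
variable (n : ℕ)

/-- series of c's -/
def CsS : PowerSeries (Rng n) := PowerSeries.mk fun k => MvPolynomial.C (cZ k)
def CsAltS : PowerSeries (Rng n) :=
  PowerSeries.mk fun k => (-1) ^ k * MvPolynomial.C (cZ k)
def EsS : PowerSeries (Rng n) := PowerSeries.mk fun i => esymF Finset.univ (xv n) i
def HsS : PowerSeries (Rng n) :=
  PowerSeries.mk fun j => hsymF Finset.univ (fun t => -(yv n t)) j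
def EYaltS : PowerSeries (Rng n) :=
  PowerSeries.mk fun j => (-1) ^ j * esymF Finset.univ (fun t => -(yv n t)) j

lemma CsS_mul_CsAltS : CsS n * CsAltS n = 1 := by
  refine PowerSeries.ext fun m => ?_
  rw [CsS, CsAltS, PowerSeries.coeff_mul]
  simp only [PowerSeries.coeff_mk]
  rcases Nat.eq_zero_or_pos m with rfl | hm
  · simp [cZ, cQ_zero]
  · have hcongr : ∀ x ∈ Finset.HasAntidiagonal.antidiagonal m,
        MvPolynomial.C (cZ x.1) * ((-1) ^ x.2 * MvPolynomial.C (cZ x.2))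
        = (MvPolynomial.C (R := GammaR) (σ := Fin n ⊕ Fin n))
            ((-1) ^ x.2 * cZ x.1 * cZ x.2) := by
      intro x _
      rw [map_mul, map_mul, map_pow, map_neg, map_one]
      ring
    rw [Finset.sum_congr rfl hcongr, ← map_sum, sum_cancel m hm, map_zero,
      PowerSeries.coeff_one, if_neg (by omega)]

lemma HsS_mul_EYaltS : HsS n * EYaltS n = 1 :=
  hsymF_mul_esymAlt Finset.univ (fun t => -(yv n t))

lemma ncn_series : (PowerSeries.mk fun p => ncn n p) = CsS n * EsS n * HsS n := by
  rw [show CsS n * EsS n * HsS n = HsS n * (EsS n * CsS n) from by ring]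
  refine PowerSeries.ext fun p => ?_
  rw [PowerSeries.coeff_mk, PowerSeries.coeff_mul,
    Finset.Nat.sum_antidiagonal_eq_sum_range_succ_mk]
  rw [ncn, Finset.sum_comm]
  refine Finset.sum_congr rfl fun j hj => ?_
  rw [Finset.mem_range] at hj
  rw [HsS, PowerSeries.coeff_mk, EsS, CsS, PowerSeries.coeff_mul,
    Finset.Nat.sum_antidiagonal_eq_sum_range_succ_mk]
  simp only [PowerSeries.coeff_mk]
  rw [Finset.mul_sum]
  rw [show p + 1 = (p - j) + 1 + j by omega]
  rw [Finset.sum_range_add]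
  have hz : ∀ i ∈ Finset.range j, (MvPolynomial.C (cQ ((p : ℤ) - ((p - j + 1 + i : ℕ) : ℤ) - j))
      * esymF Finset.univ (xv n) ((p - j) + 1 + i) *
        hsymF Finset.univ (fun t => -(yv n t)) j : Rng n) = 0 := by
    intro i _
    rw [cQ_neg (by omega), map_zero, zero_mul, zero_mul]
  rw [Finset.sum_congr rfl hz]
  rw [Finset.sum_const_zero, add_zero]
  refine Finset.sum_congr (by rw [Nat.succ_eq_add_one]) fun i hi => ?_
  rw [Finset.mem_range] at hi
  rw [show ((p : ℤ) - i - j) = ((p - j - i : ℕ) : ℤ) by omega]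
  rw [cZ]
  ring
lemma cnegn_series :
    (PowerSeries.mk fun p => (-1) ^ p * cnegn n p) = CsAltS n * EYaltS n := by
  rw [mul_comm]
  refine PowerSeries.ext fun p => ?_
  rw [PowerSeries.coeff_mk, PowerSeries.coeff_mul, CsAltS, EYaltS,
    Finset.Nat.sum_antidiagonal_eq_sum_range_succ_mk]
  simp only [PowerSeries.coeff_mk]
  rw [cnegn, Finset.mul_sum]
  refine Finset.sum_congr rfl fun j hj => ?_
  rw [Finset.mem_range] at hj
  rw [cZ, show ((p - j : ℕ) : ℤ) = (p : ℤ) - j by omega]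
  rw [show ((-1 : Rng n) ^ j * esymF Finset.univ (fun t => -(yv n t)) j) *
      ((-1) ^ (p - j) * MvPolynomial.C (cQ ((p:ℤ) - j)))
      = ((-1 : Rng n) ^ j * (-1) ^ (p - j)) * (MvPolynomial.C (cQ ((p:ℤ) - j)) *
        esymF Finset.univ (fun t => -(yv n t)) j) from by ring]
  rw [← pow_add, show j + (p - j) = p by omega]

lemma ncn_zero : ncn n 0 = 1 := by
  rw [ncn]
  norm_num [esymF_zero, hsymF_zero, cQ_zero]

lemma key_identity (p : ℕ) :
    ∑ x ∈ Finset.HasAntidiagonal.antidiagonal p, ncn n x.1 * ((-1) ^ x.2 * cnegn n x.2)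
      = esymF Finset.univ (xv n) p := by
  have hprod : (PowerSeries.mk fun q => ncn n q) *
      (PowerSeries.mk fun q => (-1) ^ q * cnegn n q) = EsS n := by
    rw [ncn_series, cnegn_series]
    rw [show CsS n * EsS n * HsS n * (CsAltS n * EYaltS n)
        = (CsS n * CsAltS n) * ((HsS n * EYaltS n) * EsS n) from by ring]
    rw [CsS_mul_CsAltS, HsS_mul_EYaltS, one_mul, one_mul]
  have := congrArg (PowerSeries.coeff p) hprod
  rw [PowerSeries.coeff_mul] at this
  simp only [PowerSeries.coeff_mk] at this
  rw [this, EsS, PowerSeries.coeff_mk]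
end Assemble


/-- For `p ≥ n+1`, the element `c^{-n}_p` lies in the ideal of `Γ[X_n, Y_n]`
generated by the elements `ⁿcⁿ_q`, `q ≥ 1`. -/
theorem cnegn_mem_ideal (n p : ℕ) (hp : n + 1 ≤ p) :
    cnegn n p ∈ Ideal.span {f : Rng n | ∃ q : ℕ, 1 ≤ q ∧ f = ncn n q} := by
  have hkey := key_identity n p
  have hE : esymF Finset.univ (xv n) p = 0 := by
    rw [esymF, Finset.powersetCard_eq_empty.2 (by simp; omega), Finset.sum_empty]
  rw [hE] at hkey
  have hmem : ((0 : ℕ), p) ∈ Finset.HasAntidiagonal.antidiagonal p := by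
    rw [Finset.HasAntidiagonal.mem_antidiagonal]; simp
  rw [← Finset.add_sum_erase _ _ hmem] at hkey
  rw [ncn_zero, one_mul] at hkey
  set S := ∑ x ∈ (Finset.HasAntidiagonal.antidiagonal p).erase (0, p),
    ncn n x.1 * ((-1) ^ x.2 * cnegn n x.2) with hS
  have hpow : (-1 : Rng n) ^ p * (-1 : Rng n) ^ p = 1 := by
    rw [← pow_add, ← two_mul, pow_mul]; norm_num
  have hc : cnegn n p = (-1) ^ p * (-S) := by
    have h1 : (-1 : Rng n) ^ p * cnegn n p = -S := eq_neg_of_add_eq_zero_left hkey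
    calc cnegn n p = ((-1 : Rng n) ^ p * (-1) ^ p) * cnegn n p := by rw [hpow, one_mul]
      _ = (-1 : Rng n) ^ p * ((-1) ^ p * cnegn n p) := by ring
      _ = (-1) ^ p * (-S) := by rw [h1]
  rw [hc, show -S = (-1 : Rng n) * S by ring]
  refine Ideal.mul_mem_left _ _ (Ideal.mul_mem_left _ _ (Ideal.sum_mem _ fun x hx => ?_))
  have hx1 : 1 ≤ x.1 := by
    rw [Finset.mem_erase, Finset.HasAntidiagonal.mem_antidiagonal] at hx
    rcases Nat.eq_zero_or_pos x.1 with h0 | h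
    · exfalso
      apply hx.1
      have : x.2 = p := by omega
      exact Prod.ext h0 this
    · exact h
  exact Ideal.mul_mem_right _ _ (Ideal.subset_span ⟨x.1, hx1, rfl⟩)
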